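/- arXiv:2602.01434 — 2 statements merged into one kernel-verified Lean document; each statement's English description precedes it below -/
import Mathlib

section
/- Let ℓ : ℝ × ℝ → ℝ be twice differentiable in its second argument with ℓ''(y, z) ≥ 0 for all y, z, and consider the two-layer network f_Θ(x) = (1/m) Σ_{j=1}^m a_j σ(θ_j^T x + b_j) with a_j ≥ 0, and the empirical risk Risk(Θ) = (1/n) Σ_{i=1}^n ℓ(y_i, f_Θ(x_i)). Write m∇²Risk(Θ) = H_diag(Θ) + H_cross(Θ) where H_cross(Θ) := (m/n) Σ_i ℓ''(y_i, f_Θ(x_i)) ∇f_Θ(x_i) ∇f_Θ(x_i)^T and H_diag(Θ) is the block-diagonal second-order part. Then: (i) λ_min(H_diag(Θ)) ≤ λ_min(m∇²Risk(Θ)); (ii) λ_min(m∇²Risk(Θ)) ≤ λ_min(H_diag(Θ)) + (C/m) ‖(1/n) Σ_i x_i x_i^T‖_op, where C depends only on the uniform bounds on ℓ'', a_j, σ'; and (iii) if ξ is a unit eigenvector of ∇²Risk(Θ) for its minimum eigenvalue, then ⟨ξ, H_diag(Θ) ξ⟩ ≤ λ_min(H_diag(Θ)) + (C/m) ‖(1/n)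 Σ_i x_i x_i^T‖_op. -/
open Matrix

/-- Euclidean dot product on `Fin d → ℝ`. -/
noncomputable def rdot {d : ℕ} (u v : Fin d → ℝ) : ℝ := ∑ p, u p * v p

/-- The two-layer network output `f_Θ(x) = (1/m) Σ_j a_j σ(θ_jᵀ x + b_j)`. -/
noncomputable def netOut (m d : ℕ) (a bv : Fin m → ℝ) (σ : ℝ → ℝ)
    (θ : Fin m → Fin d → ℝ) (xi : Fin d → ℝ) : ℝ :=
  (m : ℝ)⁻¹ * ∑ j, a j * σ (rdot (θ j) xi + bv j)

/-- The gradient `∇f_Θ(x) ∈ ℝ^{md}`, with blocks `(1/m) a_j σ'(θ_jᵀ x + b_j) x`. -/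
noncomputable def gradNet (m d : ℕ) (a bv : Fin m → ℝ) (σ' : ℝ → ℝ)
    (θ : Fin m → Fin d → ℝ) (xi : Fin d → ℝ) : Fin m × Fin d → ℝ :=
  fun jp => (m : ℝ)⁻¹ * a jp.1 * σ' (rdot (θ jp.1) xi + bv jp.1) * xi jp.2

/-- The cross (Gauss–Newton) part
`H_cross(Θ) = (m/n) Σ_i ℓ''(y_i, f_Θ(x_i)) ∇f_Θ(x_i) ∇f_Θ(x_i)ᵀ`. -/
noncomputable def Hcross (m d n : ℕ) (x : Fin n → Fin d → ℝ) (y : Fin n → ℝ)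
    (a bv : Fin m → ℝ) (σ σ' : ℝ → ℝ) (ℓ'' : ℝ → ℝ → ℝ) (θ : Fin m → Fin d → ℝ) :
    Matrix (Fin m × Fin d) (Fin m × Fin d) ℝ :=
  ((m : ℝ) / n) • ∑ i, ℓ'' (y i) (netOut m d a bv σ θ (x i)) •
    Matrix.vecMulVec (gradNet m d a bv σ' θ (x i)) (gradNet m d a bv σ' θ (x i))

/-- The block-diagonal second-order part `H_diag(Θ)`, whose `j`-th diagonal block is
`(m/n) Σ_i ℓ'(y_i, f_Θ(x_i)) (1/m) a_j σ''(θ_jᵀ x_i + b_j) x_i x_iᵀ`. -/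
noncomputable def Hdiag (m d n : ℕ) (x : Fin n → Fin d → ℝ) (y : Fin n → ℝ)
    (a bv : Fin m → ℝ) (σ σ'' : ℝ → ℝ) (ℓ' : ℝ → ℝ → ℝ) (θ : Fin m → Fin d → ℝ) :
    Matrix (Fin m × Fin d) (Fin m × Fin d) ℝ :=
  Matrix.of fun jp kq =>
    if jp.1 = kq.1 then
      ((m : ℝ) / n) * ∑ i, ℓ' (y i) (netOut m d a bv σ θ (x i)) *
        ((m : ℝ)⁻¹ * a jp.1 * σ'' (rdot (θ jp.1) (x i) + bv jp.1) * x i jp.2 * x i kq.2)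
    else 0

/-- Minimum of the Rayleigh quotient over unit vectors (equal to the minimum eigenvalue
for symmetric matrices). -/
noncomputable def lamMin {ι : Type*} [Fintype ι] (A : Matrix ι ι ℝ) : ℝ :=
  sInf {r : ℝ | ∃ v : ι → ℝ, (∑ i, v i ^ 2) = 1 ∧ r = v ⬝ᵥ A.mulVec v}

/-- Maximum of the Rayleigh quotient over unit vectors (equal to the operator norm for
positive semidefinite symmetric matrices, e.g. the sample covariance `(1/n) Σ x_i x_iᵀ`). -/
noncomputable def opRay {ι : Type*} [Fintype ι] (A : Matrix ι ι ℝ) : ℝ :=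
  sSup {r : ℝ | ∃ v : ι → ℝ, (∑ i, v i ^ 2) = 1 ∧ r = v ⬝ᵥ A.mulVec v}


section Aux
variable {ι : Type*} [Fintype ι]

lemma myquad_vecMulVec (u v : ι → ℝ) : v ⬝ᵥ (vecMulVec u u).mulVec v = (u ⬝ᵥ v)^2 := by
  simp only [Matrix.mulVec, Matrix.vecMulVec_apply, dotProduct, Finset.mul_sum, Finset.sum_mul, sq]
  rw [Finset.sum_comm]
  apply Finset.sum_congr rfl; intros; apply Finset.sum_congr rfl; intros; ring

lemma myquad_smul (c : ℝ) (A : Matrix ι ι ℝ) (v : ι → ℝ) :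
    v ⬝ᵥ (c • A).mulVec v = c * (v ⬝ᵥ A.mulVec v) := by
  rw [Matrix.smul_mulVec, dotProduct_smul]; rfl

lemma myquad_sum {κ : Type*} [Fintype κ] (A : κ → Matrix ι ι ℝ) (v : ι → ℝ) :
    v ⬝ᵥ (∑ k, A k).mulVec v = ∑ k, v ⬝ᵥ (A k).mulVec v := by
  have h1 : (∑ k, A k).mulVec v = ∑ k, (A k).mulVec v := by
    ext p
    simp [Matrix.mulVec, dotProduct, Matrix.sum_apply, Finset.sum_apply, Finset.sum_mul]
    rw [Finset.sum_comm]
  rw [h1]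
  simp only [dotProduct, Finset.sum_apply, Finset.mul_sum]
  rw [Finset.sum_comm]

lemma myquad_smul_vec (A : Matrix ι ι ℝ) (c : ℝ) (v : ι → ℝ) :
    (c • v) ⬝ᵥ A.mulVec (c • v) = c^2 * (v ⬝ᵥ A.mulVec v) := by
  rw [Matrix.mulVec_smul, smul_dotProduct, dotProduct_smul]
  simp [smul_eq_mul, sq]; ring

lemma myunit_abs_le (v : ι → ℝ) (hv : ∑ i, v i ^ 2 = 1) (i : ι) : |v i| ≤ 1 := by
  have h := Finset.single_le_sum (f := fun j => v j ^ 2) (fun j _ => sq_nonneg _) (Finset.mem_univ i)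
  rw [hv] at h
  have h2 : v i ^ 2 ≤ 1 := h
  nlinarith [abs_nonneg (v i), sq_abs (v i)]

lemma myquad_abs_le (A : Matrix ι ι ℝ) (v : ι → ℝ) (hv : ∑ i, v i ^ 2 = 1) :
    |v ⬝ᵥ A.mulVec v| ≤ ∑ p, ∑ q, |A p q| := by
  have hv1 : ∀ i, |v i| ≤ 1 := myunit_abs_le v hv
  calc |v ⬝ᵥ A.mulVec v| = |∑ p, ∑ q, v p * (A p q * v q)| := by
        simp [dotProduct, Matrix.mulVec, Finset.mul_sum]
   _ ≤ ∑ p, |∑ q, v p * (A p q * v q)| := Finset.abs_sum_le_sum_abs _ _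
   _ ≤ ∑ p, ∑ q, |v p * (A p q * v q)| :=
        Finset.sum_le_sum fun p _ => Finset.abs_sum_le_sum_abs _ _
   _ ≤ ∑ p, ∑ q, |A p q| := by
        apply Finset.sum_le_sum; intro p _; apply Finset.sum_le_sum; intro q _
        rw [abs_mul, abs_mul]
        calc |v p| * (|A p q| * |v q|) ≤ 1 * (|A p q| * 1) :=
              mul_le_mul (hv1 p) (mul_le_mul_of_nonneg_left (hv1 q) (abs_nonneg _))
                (by positivity) zero_le_one
         _ = |A p q| := by ring

lemma myraySet_bddBelow (A : Matrix ι ι ℝ) :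
    BddBelow {r : ℝ | ∃ v : ι → ℝ, (∑ i, v i ^ 2) = 1 ∧ r = v ⬝ᵥ A.mulVec v} := by
  refine ⟨-(∑ p, ∑ q, |A p q|), ?_⟩
  rintro r ⟨v, hv, rfl⟩
  have := myquad_abs_le A v hv
  linarith [neg_abs_le (v ⬝ᵥ A.mulVec v)]

lemma myraySet_bddAbove (A : Matrix ι ι ℝ) :
    BddAbove {r : ℝ | ∃ v : ι → ℝ, (∑ i, v i ^ 2) = 1 ∧ r = v ⬝ᵥ A.mulVec v} := by
  refine ⟨∑ p, ∑ q, |A p q|, ?_⟩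
  rintro r ⟨v, hv, rfl⟩
  have := myquad_abs_le A v hv
  linarith [le_abs_self (v ⬝ᵥ A.mulVec v)]

lemma myraySet_nonempty [Nonempty ι] (A : Matrix ι ι ℝ) :
    {r : ℝ | ∃ v : ι → ℝ, (∑ i, v i ^ 2) = 1 ∧ r = v ⬝ᵥ A.mulVec v}.Nonempty := by
  classical
  obtain ⟨i0⟩ := ‹Nonempty ι›
  refine ⟨_, ⟨fun j => if j = i0 then 1 else 0, ?_, rfl⟩⟩
  simp [ite_pow, Finset.sum_ite_eq']

lemma exists_good_block {m : ℕ} (t q : Fin m → ℝ) (ht0 : ∀ j, 0 ≤ t j)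
    (ht1 : ∑ j, t j = 1) (hq0 : ∀ j, t j = 0 → q j = 0) :
    ∃ j, 0 < t j ∧ q j ≤ t j * (∑ k, q k) := by
  by_contra h
  push_neg at h
  have hle : ∀ j ∈ Finset.univ, t j * (∑ k, q k) ≤ q j := by
    intro j _
    rcases eq_or_lt_of_le (ht0 j) with h' | h'
    · rw [hq0 j h'.symm, ← h', zero_mul]
    · exact (h j h').le
  have hex : ∃ j ∈ Finset.univ, t j * (∑ k, q k) < q j := by
    obtain ⟨j, hj⟩ : ∃ j, 0 < t j := by
      by_contra h'
      push_neg at h'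
      have : ∑ j, t j = 0 := Finset.sum_eq_zero fun j _ => le_antisymm (h' j) (ht0 j)
      rw [this] at ht1; norm_num at ht1
    exact ⟨j, Finset.mem_univ j, h j hj⟩
  have hlt := Finset.sum_lt_sum hle hex
  rw [← Finset.sum_mul, ht1, one_mul] at hlt
  exact lt_irrefl _ hlt

end Aux

lemma lamMin_le {ι : Type*} [Fintype ι] (A : Matrix ι ι ℝ) (v : ι → ℝ)
    (hv : ∑ i, v i ^ 2 = 1) : lamMin A ≤ v ⬝ᵥ A.mulVec v :=
  csInf_le (myraySet_bddBelow A) ⟨v, hv, rfl⟩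

lemma le_lamMin {ι : Type*} [Fintype ι] [Nonempty ι] (A : Matrix ι ι ℝ) {r : ℝ}
    (h : ∀ v : ι → ℝ, ∑ i, v i ^ 2 = 1 → r ≤ v ⬝ᵥ A.mulVec v) : r ≤ lamMin A :=
  le_csInf (myraySet_nonempty A) (by rintro s ⟨v, hv, rfl⟩; exact h v hv)

lemma le_opRay {ι : Type*} [Fintype ι] (A : Matrix ι ι ℝ) (v : ι → ℝ)
    (hv : ∑ i, v i ^ 2 = 1) : v ⬝ᵥ A.mulVec v ≤ opRay A :=
  le_csSup (myraySet_bddAbove A) ⟨v, hv, rfl⟩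

/-- The eigenvalue sandwich for the Hessian of the empirical risk: writing
`m∇²Risk(Θ) = H_diag(Θ) + H_cross(Θ)`, with `ℓ'' ≥ 0` and `a_j ≥ 0`,
(i) `λ_min(H_diag) ≤ λ_min(m∇²Risk)`,
(ii) `λ_min(m∇²Risk) ≤ λ_min(H_diag) + (C/m) ‖(1/n) Σ_i x_i x_iᵀ‖_op`,
(iii) for a unit eigenvector `ξ` of the minimum eigenvalue of the Hessian,
`⟨ξ, H_diag ξ⟩ ≤ λ_min(H_diag) + (C/m) ‖(1/n) Σ_i x_i x_iᵀ‖_op`,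
where `C` depends only on the uniform bounds `Cb` on `ℓ''`, `a_j`, `σ'`. -/
theorem stmt5 (Cb : ℝ) (hCb : 0 ≤ Cb) :
    ∃ C : ℝ, 0 ≤ C ∧
      ∀ (m d n : ℕ), 0 < m → 0 < n → 0 < d →
      ∀ (x : Fin n → Fin d → ℝ) (y : Fin n → ℝ) (θ : Fin m → Fin d → ℝ)
        (a bv : Fin m → ℝ) (σ σ' σ'' : ℝ → ℝ) (ℓ' ℓ'' : ℝ → ℝ → ℝ),
        (∀ j, 0 ≤ a j) → (∀ j, a j ≤ Cb) → (∀ u, |σ' u| ≤ Cb) →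
        (∀ u v, 0 ≤ ℓ'' u v) → (∀ u v, ℓ'' u v ≤ Cb) →
        lamMin (Hdiag m d n x y a bv σ σ'' ℓ' θ) ≤
            lamMin (Hdiag m d n x y a bv σ σ'' ℓ' θ + Hcross m d n x y a bv σ σ' ℓ'' θ) ∧
        lamMin (Hdiag m d n x y a bv σ σ'' ℓ' θ + Hcross m d n x y a bv σ σ' ℓ'' θ) ≤
            lamMin (Hdiag m d n x y a bv σ σ'' ℓ' θ) +
              (C / m) * opRay ((n : ℝ)⁻¹ • ∑ i, Matrix.vecMulVec (x i) (x i)) ∧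
        ∀ ξ : Fin m × Fin d → ℝ, (∑ jp, ξ jp ^ 2) = 1 →
          (Hdiag m d n x y a bv σ σ'' ℓ' θ + Hcross m d n x y a bv σ σ' ℓ'' θ).mulVec ξ =
            lamMin (Hdiag m d n x y a bv σ σ'' ℓ' θ + Hcross m d n x y a bv σ σ' ℓ'' θ) • ξ →
          ξ ⬝ᵥ (Hdiag m d n x y a bv σ σ'' ℓ' θ).mulVec ξ ≤
            lamMin (Hdiag m d n x y a bv σ σ'' ℓ' θ) +
              (C / m) * opRay ((n : ℝ)⁻¹ • ∑ i, Matrix.vecMulVec (x i) (x i)) := by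
  classical
  refine ⟨Cb ^ 5, by positivity, ?_⟩
  intro m d n hm hn hd x y θ a bv σ σ' σ'' ℓ' ℓ'' ha0 ha1 hσ'b hℓ0 hℓ1
  have hne : Nonempty (Fin m × Fin d) := ⟨(⟨0, hm⟩, ⟨0, hd⟩)⟩
  have hm0 : (0:ℝ) < m := by exact_mod_cast hm
  have hn0 : (0:ℝ) < n := by exact_mod_cast hn
  have hCb5 : (0:ℝ) ≤ Cb ^ 5 := pow_nonneg hCb 5
  have hCb5m : (0:ℝ) ≤ Cb ^ 5 / m := div_nonneg hCb5 hm0.le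
  set Hd := Hdiag m d n x y a bv σ σ'' ℓ' θ with hHddef
  set Hc := Hcross m d n x y a bv σ σ' ℓ'' θ with hHcdef
  set S : Matrix (Fin d) (Fin d) ℝ := (n : ℝ)⁻¹ • ∑ i, Matrix.vecMulVec (x i) (x i) with hSdef
  set g : Fin n → (Fin m × Fin d → ℝ) := fun i => gradNet m d a bv σ' θ (x i) with hgdef
  set c : Fin n → ℝ := fun i => ℓ'' (y i) (netOut m d a bv σ θ (x i)) with hcdef
  set B : Fin m → Matrix (Fin d) (Fin d) ℝ := fun j => Matrix.of fun p q =>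
    ((m:ℝ)/n) * ∑ i, ℓ' (y i) (netOut m d a bv σ θ (x i)) *
      ((m:ℝ)⁻¹ * a j * σ'' (rdot (θ j) (x i) + bv j) * x i p * x i q) with hBdef
  have hsplit : ∀ v : Fin m × Fin d → ℝ,
      v ⬝ᵥ (Hd + Hc).mulVec v = v ⬝ᵥ Hd.mulVec v + v ⬝ᵥ Hc.mulVec v := by
    intro v; rw [Matrix.add_mulVec, dotProduct_add]
  have hHcq : ∀ v : Fin m × Fin d → ℝ,
      v ⬝ᵥ Hc.mulVec v = ((m:ℝ)/n) * ∑ i, c i * (g i ⬝ᵥ v)^2 := by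
    intro v
    rw [hHcdef]
    unfold Hcross
    rw [myquad_smul, myquad_sum]
    congr 1
    apply Finset.sum_congr rfl
    intro i _
    rw [myquad_smul, myquad_vecMulVec]
  have hHcpos : ∀ v, 0 ≤ v ⬝ᵥ Hc.mulVec v := by
    intro v; rw [hHcq]
    apply mul_nonneg (by positivity)
    exact Finset.sum_nonneg fun i _ => mul_nonneg (hℓ0 _ _) (sq_nonneg _)
  have hHdq : ∀ v : Fin m × Fin d → ℝ,
      v ⬝ᵥ Hd.mulVec v = ∑ j, (fun p => v (j,p)) ⬝ᵥ (B j).mulVec (fun p => v (j,p)) := by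
    intro v
    rw [hHddef]
    simp only [hBdef]
    simp only [Hdiag, Matrix.mulVec, dotProduct, Matrix.of_apply, Fintype.sum_prod_type,
      ite_mul, zero_mul, Finset.sum_ite_irrel, Finset.sum_const_zero, Finset.sum_ite_eq,
      Finset.mem_univ, if_true]
  have hSq : ∀ u : Fin d → ℝ, u ⬝ᵥ S.mulVec u = (n:ℝ)⁻¹ * ∑ i, ((x i) ⬝ᵥ u)^2 := by
    intro u
    rw [hSdef, myquad_smul, myquad_sum]
    congr 1
    exact Finset.sum_congr rfl fun i _ => myquad_vecMulVec _ _
  have hi : lamMin Hd ≤ lamMin (Hd + Hc) := by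
    apply le_lamMin
    intro v hv
    rw [hsplit]
    have h1 := lamMin_le Hd v hv
    have h2 := hHcpos v
    linarith
  have hmain : ∀ v : Fin m × Fin d → ℝ, (∑ jp, v jp ^ 2) = 1 →
      lamMin (Hd + Hc) ≤ v ⬝ᵥ Hd.mulVec v + Cb ^ 5 / m * opRay S := by
    intro v hv
    set t : Fin m → ℝ := fun j => ∑ p, v (j, p) ^ 2 with htdef
    set q : Fin m → ℝ := fun j =>
      (fun p => v (j,p)) ⬝ᵥ (B j).mulVec (fun p => v (j,p)) with hqdef
    have ht0 : ∀ j, 0 ≤ t j := fun j => Finset.sum_nonneg fun p _ => sq_nonneg _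
    have ht1 : ∑ j, t j = 1 := by
      simp only [htdef]
      exact (Fintype.sum_prod_type (f := fun jp => v jp ^ 2)).symm.trans hv
    have hq0 : ∀ j, t j = 0 → q j = 0 := by
      intro j hj
      simp only [htdef] at hj
      have hz : ∀ p, v (j, p) = 0 := by
        intro p
        have h2 := (Finset.sum_eq_zero_iff_of_nonneg
          (fun p _ => sq_nonneg (v (j,p)))).mp hj p (Finset.mem_univ p)
        exact sq_eq_zero_iff.mp h2
      simp only [hqdef]
      rw [show (fun p => v (j,p)) = (fun _ => (0:ℝ)) from funext hz]
      simp [dotProduct]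
    obtain ⟨j0, hj0pos, hj0le⟩ := exists_good_block t q ht0 ht1 hq0
    set s0 : ℝ := Real.sqrt (t j0) with hs0
    have hs0sq : s0 ^ 2 = t j0 := Real.sq_sqrt (ht0 j0)
    set u : Fin d → ℝ := fun p => s0⁻¹ * v (j0, p) with hudef
    have huu : ∑ p, u p ^ 2 = 1 := by
      have h1 : ∑ p, u p ^ 2 = s0⁻¹ ^ 2 * ∑ p, v (j0,p) ^ 2 := by
        rw [Finset.mul_sum]
        exact Finset.sum_congr rfl fun p _ => by simp only [hudef]; ring
      rw [h1, inv_pow, hs0sq]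
      exact inv_mul_cancel₀ (ne_of_gt hj0pos)
    set w : Fin m × Fin d → ℝ := fun jp => if jp.1 = j0 then u jp.2 else 0 with hwdef
    have hwunit : ∑ jp, w jp ^ 2 = 1 := by
      simp only [hwdef, Fintype.sum_prod_type, apply_ite (· ^ 2), Finset.sum_ite_irrel,
        Finset.sum_const_zero, Finset.sum_ite_eq', Finset.mem_univ, if_true]
      simpa using huu
    have hueq : u = s0⁻¹ • (fun p => v (j0,p)) := by
      funext p; simp [hudef]
    have hwHd : w ⬝ᵥ Hd.mulVec w = (t j0)⁻¹ * q j0 := by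
      rw [hHdq w]
      have hcases : ∀ j, (fun p => w (j,p)) ⬝ᵥ (B j).mulVec (fun p => w (j,p))
          = if j = j0 then (t j0)⁻¹ * q j0 else 0 := by
        intro j
        by_cases hj : j = j0
        · subst hj
          rw [if_pos rfl]
          have hwu : (fun p => w (j, p)) = u := by
            funext p; simp [hwdef]
          rw [hwu, hueq, myquad_smul_vec, inv_pow, hs0sq]
        · rw [if_neg hj]
          have hz : (fun p => w (j, p)) = (fun _ => (0:ℝ)) := by
            funext p; simp [hwdef, hj]
          rw [hz]
          simp [dotProduct]
      rw [Finset.sum_congr rfl (fun j _ => hcases j), Finset.sum_ite_eq',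
        if_pos (Finset.mem_univ j0)]
    have hsum_q : ∑ k, q k = v ⬝ᵥ Hd.mulVec v := (hHdq v).symm
    have hwHd_le : w ⬝ᵥ Hd.mulVec w ≤ v ⬝ᵥ Hd.mulVec v := by
      rw [hwHd, ← hsum_q]
      calc (t j0)⁻¹ * q j0 ≤ (t j0)⁻¹ * (t j0 * ∑ k, q k) :=
            mul_le_mul_of_nonneg_left hj0le (inv_nonneg.mpr (ht0 j0))
       _ = ∑ k, q k := by
            rw [← mul_assoc, inv_mul_cancel₀ (ne_of_gt hj0pos), one_mul]
    have hgw : ∀ i, g i ⬝ᵥ w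
        = (m:ℝ)⁻¹ * a j0 * σ' (rdot (θ j0) (x i) + bv j0) * ((x i) ⬝ᵥ u) := by
      intro i
      simp only [hgdef, hwdef]
      simp only [gradNet, dotProduct, Fintype.sum_prod_type, mul_ite, mul_zero,
        Finset.sum_ite_irrel, Finset.sum_const_zero, Finset.sum_ite_eq', Finset.mem_univ,
        if_true]
      rw [Finset.mul_sum]
      exact Finset.sum_congr rfl fun p _ => by ring
    have hwHc : w ⬝ᵥ Hc.mulVec w ≤ Cb ^ 5 / m * opRay S := by
      rw [hHcq]
      have hterm : ∀ i, c i * (g i ⬝ᵥ w) ^ 2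
          ≤ (m:ℝ)⁻¹ ^ 2 * Cb ^ 5 * ((x i) ⬝ᵥ u) ^ 2 := by
        intro i
        rw [hgw i]
        have hc0 : 0 ≤ c i := hℓ0 _ _
        have hc1 : c i ≤ Cb := hℓ1 _ _
        have ha2 : a j0 ^ 2 ≤ Cb ^ 2 := by nlinarith [ha0 j0, ha1 j0]
        have hs2 : (σ' (rdot (θ j0) (x i) + bv j0)) ^ 2 ≤ Cb ^ 2 := by
          nlinarith [sq_abs (σ' (rdot (θ j0) (x i) + bv j0)),
            abs_nonneg (σ' (rdot (θ j0) (x i) + bv j0)),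
            hσ'b (rdot (θ j0) (x i) + bv j0)]
        have h4 : a j0 ^ 2 * (σ' (rdot (θ j0) (x i) + bv j0)) ^ 2 ≤ Cb ^ 2 * Cb ^ 2 :=
          mul_le_mul ha2 hs2 (sq_nonneg _) (by positivity)
        have h5 : c i * (a j0 ^ 2 * (σ' (rdot (θ j0) (x i) + bv j0)) ^ 2)
            ≤ Cb * (Cb ^ 2 * Cb ^ 2) :=
          mul_le_mul hc1 h4 (mul_nonneg (sq_nonneg _) (sq_nonneg _)) hCb
        calc c i * ((m:ℝ)⁻¹ * a j0 * σ' (rdot (θ j0) (x i) + bv j0) * ((x i) ⬝ᵥ u)) ^ 2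
            = (c i * (a j0 ^ 2 * (σ' (rdot (θ j0) (x i) + bv j0)) ^ 2))
              * ((m:ℝ)⁻¹ ^ 2 * ((x i) ⬝ᵥ u) ^ 2) := by ring
         _ ≤ (Cb * (Cb ^ 2 * Cb ^ 2)) * ((m:ℝ)⁻¹ ^ 2 * ((x i) ⬝ᵥ u) ^ 2) :=
              mul_le_mul_of_nonneg_right h5 (by positivity)
         _ = (m:ℝ)⁻¹ ^ 2 * Cb ^ 5 * ((x i) ⬝ᵥ u) ^ 2 := by ring
      have hsum : ∑ i, c i * (g i ⬝ᵥ w) ^ 2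
          ≤ (m:ℝ)⁻¹ ^ 2 * Cb ^ 5 * ∑ i, ((x i) ⬝ᵥ u) ^ 2 := by
        rw [Finset.mul_sum]
        exact Finset.sum_le_sum fun i _ => hterm i
      have hSle : u ⬝ᵥ S.mulVec u ≤ opRay S := le_opRay S u huu
      calc ((m:ℝ)/n) * ∑ i, c i * (g i ⬝ᵥ w) ^ 2
          ≤ ((m:ℝ)/n) * ((m:ℝ)⁻¹ ^ 2 * Cb ^ 5 * ∑ i, ((x i) ⬝ᵥ u) ^ 2) :=
            mul_le_mul_of_nonneg_left hsum (by positivity)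
       _ = Cb ^ 5 / m * ((n:ℝ)⁻¹ * ∑ i, ((x i) ⬝ᵥ u) ^ 2) := by
            field_simp
       _ = Cb ^ 5 / m * (u ⬝ᵥ S.mulVec u) := by rw [hSq u]
       _ ≤ Cb ^ 5 / m * opRay S := mul_le_mul_of_nonneg_left hSle hCb5m
    calc lamMin (Hd + Hc) ≤ w ⬝ᵥ (Hd + Hc).mulVec w := lamMin_le _ w hwunit
     _ = w ⬝ᵥ Hd.mulVec w + w ⬝ᵥ Hc.mulVec w := hsplit w
     _ ≤ v ⬝ᵥ Hd.mulVec v + Cb ^ 5 / m * opRay S := add_le_add hwHd_le hwHc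
  have hii : lamMin (Hd + Hc) ≤ lamMin Hd + Cb ^ 5 / m * opRay S := by
    have h1 : lamMin (Hd + Hc) - Cb ^ 5 / m * opRay S ≤ lamMin Hd := by
      apply le_lamMin
      intro v hv
      linarith [hmain v hv]
    linarith
  refine ⟨hi, hii, ?_⟩
  intro ξ hξ hev
  have h1 : ξ ⬝ᵥ (Hd + Hc).mulVec ξ = lamMin (Hd + Hc) := by
    rw [hev, dotProduct_smul, smul_eq_mul]
    have h2 : ξ ⬝ᵥ ξ = 1 := by
      rw [← hξ]
      exact Finset.sum_congr rfl fun jp _ => (sq (ξ jp)).symm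
    rw [h2, mul_one]
  have h2 := hsplit ξ
  have h3 := hHcpos ξ
  linarith
end

section
/- Consider the collection of 'hard orthonormal sets' 𝒰_H of matrices U ∈ ℝ^{k×k′} with orthonormal columns such that E[𝒯(y, P_U^⊥ z, ξ) P_U z] = 0 for all measurable 𝒯 : ℝ^{k+2} → ℝ for which the expectation is defined, where z ∼ N(0, I_k), y = h(z, ε) with ε ∼ N(0,1) independent of z, ξ ∼ N(0,1) independent of everything, P_U = UU^T and P_U^⊥ = I − P_U. Then: (i) U ∈ 𝒰_H if and only if E[P_U z | y, P_U^⊥ z] = 0 almost surely; and (ii) if span(U_1) and span(U_2) are both spanned by hard orthonormal sets, then their sum span(U_1) + span(U_2) is also spanned by a hard orthonormal set. Consequently there is a unique maximal hard subspace. -/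
open Matrix MeasureTheory ProbabilityTheory

/-- Projection `P_U = UUᵀ` applied to a vector. -/
noncomputable def PU {k k' : ℕ} (U : Matrix (Fin k) (Fin k') ℝ) (v : Fin k → ℝ) :
    Fin k → ℝ :=
  (U * Uᵀ).mulVec v

/-- Complementary projection `P_U^⊥ = I − UUᵀ` applied to a vector. -/
noncomputable def PUperp {k k' : ℕ} (U : Matrix (Fin k) (Fin k') ℝ) (v : Fin k → ℝ) :
    Fin k → ℝ :=
  v - PU U v

/-- `U` is a hard orthonormal set: its columns are orthonormal and
`E[𝒯(y, P_U^⊥ z, ξ) P_U z] = 0` for every measurable `𝒯` for which the expectation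
is defined. -/
def IsHardFrame {k : ℕ} (Ω : Type*) [MeasurableSpace Ω] (P : Measure Ω)
    (z : Ω → Fin k → ℝ) (y : Ω → ℝ) (ξ : Ω → ℝ)
    {k' : ℕ} (U : Matrix (Fin k) (Fin k') ℝ) : Prop :=
  Uᵀ * U = 1 ∧
  ∀ T : ℝ → (Fin k → ℝ) → ℝ → ℝ,
    Measurable (fun p : ℝ × (Fin k → ℝ) × ℝ => T p.1 p.2.1 p.2.2) →
    (∀ j, Integrable (fun ω => T (y ω) (PUperp U (z ω)) (ξ ω) * PU U (z ω) j) P) →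
    ∀ j, ∫ ω, T (y ω) (PUperp U (z ω)) (ξ ω) * PU U (z ω) j ∂P = 0

/-- The column span of a matrix, inside `Fin k → ℝ`. -/
def colSpanR {k k' : ℕ} (U : Matrix (Fin k) (Fin k') ℝ) : Submodule ℝ (Fin k → ℝ) :=
  Submodule.span ℝ (Set.range fun c : Fin k' => fun i => U i c)

/-! ### Auxiliary lemmas -/

section Aux
open Real

lemma aux_integrable_id_gaussianReal : Integrable (fun x : ℝ => x) (gaussianReal 0 1) := by
  rw [gaussianReal_of_var_ne_zero 0 one_ne_zero]
  rw [integrable_withDensity_iff (measurable_gaussianPDF 0 1) (by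
    refine ae_of_all _ fun x => ?_
    exact ENNReal.ofReal_lt_top)]
  have : (fun x : ℝ => x * ((gaussianPDF 0 1 x).toReal)) =
      fun x : ℝ => (√(2 * π))⁻¹ * (x * rexp (-(2⁻¹) * x ^ 2)) := by
    funext x
    rw [gaussianPDF, ENNReal.toReal_ofReal (gaussianPDFReal_nonneg _ _ _), gaussianPDFReal]
    push_cast
    ring_nf
  rw [this]
  exact (integrable_mul_exp_neg_mul_sq (by norm_num : (0:ℝ) < 2⁻¹)).const_mul _

lemma aux_map_eval_pi {k : ℕ} (μ : Fin k → Measure ℝ) [∀ i, IsProbabilityMeasure (μ i)]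
    (i : Fin k) :
    Measure.map (fun x : Fin k → ℝ => x i) (Measure.pi μ) = μ i := by
  refine Measure.ext fun s hs => ?_
  rw [Measure.map_apply (measurable_pi_apply i) hs]
  have : (fun x : Fin k → ℝ => x i) ⁻¹' s
      = Set.pi Set.univ (Function.update (fun _ => Set.univ) i s) := by
    ext x
    simp only [Set.mem_preimage, Set.mem_pi, Set.mem_univ, true_implies]
    constructor
    · intro hx j
      rcases eq_or_ne j i with rfl | hj
      · simpa using hx
      · simp [Function.update_of_ne hj]
    · intro hx; have := hx i; simpa using this
  rw [this, Measure.pi_pi]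
  rw [Finset.prod_eq_single i]
  · simp
  · intro j _ hj; simp [Function.update_of_ne hj]
  · simp

variable {Ω : Type*} [MeasurableSpace Ω] {k : ℕ}

lemma aux_integrable_coord (P : Measure Ω) [IsProbabilityMeasure P] (z : Ω → Fin k → ℝ)
    (hzme : Measurable z)
    (hz : Measure.map z P = Measure.pi fun _ : Fin k => gaussianReal 0 1) (i : Fin k) :
    Integrable (fun ω => z ω i) P := by
  have h1 : Integrable (fun x : Fin k → ℝ => x i) (Measure.map z P) := by
    rw [hz]
    have hmap := aux_map_eval_pi (fun _ : Fin k => gaussianReal 0 1) i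
    have := (integrable_map_measure
      (aestronglyMeasurable_id (μ := Measure.map (fun x : Fin k → ℝ => x i)
        (Measure.pi fun _ : Fin k => gaussianReal 0 1)))
      (measurable_pi_apply i).aemeasurable).mp
    rw [hmap] at this
    exact this aux_integrable_id_gaussianReal
  exact (integrable_map_measure (measurable_pi_apply i).aestronglyMeasurable
    hzme.aemeasurable).mp h1

lemma aux_integrable_mulVec_coord (P : Measure Ω) (z : Ω → Fin k → ℝ)
    (hzc : ∀ i, Integrable (fun ω => z ω i) P) (M : Matrix (Fin k) (Fin k) ℝ) (j : Fin k) :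
    Integrable (fun ω => M.mulVec (z ω) j) P := by
  have : (fun ω => M.mulVec (z ω) j) = fun ω => ∑ l, M j l * z ω l := by
    funext ω; rfl
  rw [this]
  exact integrable_finset_sum _ fun l _ => (hzc l).const_mul _

lemma aux_measurable_mulVec_comp (z : Ω → Fin k → ℝ) (hzme : Measurable z)
    (M : Matrix (Fin k) (Fin k) ℝ) : Measurable fun ω => M.mulVec (z ω) := by
  apply measurable_pi_lambda
  intro j
  have : (fun ω => M.mulVec (z ω) j) = fun ω => ∑ l, M j l * z ω l := by
    funext ω; rfl
  rw [this]
  exact Finset.measurable_sum _ fun l _ => ((hzme.eval (a := l)).const_mul _)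

variable {α : Type*} [MeasurableSpace α]

lemma aux_condexp_zero_of_setIntegrals (P : Measure Ω) [IsProbabilityMeasure P]
    (W : Ω → α) (hW : Measurable W) (X : Ω → ℝ) (hX : Integrable X P)
    (H : ∀ t : Set α, MeasurableSet t → ∫ ω in W ⁻¹' t, X ω ∂P = 0) :
    P[X | MeasurableSpace.comap W inferInstance] =ᵐ[P] 0 := by
  have hm : MeasurableSpace.comap W inferInstance ≤ _ := hW.comap_le
  refine (ae_eq_condExp_of_forall_setIntegral_eq hm hX
    (fun s _ _ => (integrable_zero _ _ _).integrableOn) (fun s hs _ => ?_)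
    (stronglyMeasurable_const.aestronglyMeasurable)).symm
  obtain ⟨t, ht, rfl⟩ := hs
  rw [H t ht]
  simp

lemma aux_integral_g_mul_eq_zero (P : Measure Ω) [IsProbabilityMeasure P]
    (W : Ω → α) (hW : Measurable W) (X : Ω → ℝ) (hXint : Integrable X P)
    (hce : P[X | MeasurableSpace.comap W inferInstance] =ᵐ[P] 0)
    (g : α → ℝ) (hg : Measurable g)
    (hint : Integrable (fun ω => g (W ω) * X ω) P) :
    ∫ ω, g (W ω) * X ω ∂P = 0 := by
  set m := MeasurableSpace.comap W inferInstance with hm_def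
  have hm : m ≤ _ := hW.comap_le
  have hWm : Measurable[m] W := Measurable.of_comap_le le_rfl
  have hmeas : StronglyMeasurable[m] (fun ω => g (W ω)) :=
    (hg.comp hWm).stronglyMeasurable
  have h1 := condExp_mul_of_stronglyMeasurable_left (μ := P) hmeas hint hXint
  have h2 : P[(fun ω => g (W ω) * X ω) | m] =ᵐ[P] 0 := by
    refine h1.trans ?_
    filter_upwards [hce] with ω hω
    simp only [Pi.mul_apply, hω, Pi.zero_apply, mul_zero]
  calc ∫ ω, g (W ω) * X ω ∂P = ∫ ω, (P[(fun ω => g (W ω) * X ω) | m]) ω ∂P :=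
        (integral_condExp hm).symm
    _ = ∫ ω, (0 : Ω → ℝ) ω ∂P := integral_congr_ae h2
    _ = 0 := by simp

lemma aux_integral_T_mul_eq_zero (P : Measure Ω) [IsProbabilityMeasure P]
    (W : Ω → α) (hW : Measurable W) (ξ : Ω → ℝ) (hξme : Measurable ξ)
    (X : Ω → ℝ) (hXme : Measurable X) (hXint : Integrable X P)
    (hind : IndepFun (fun ω => (W ω, X ω)) ξ P)
    (hce : P[X | MeasurableSpace.comap W inferInstance] =ᵐ[P] 0)
    (T : α → ℝ → ℝ) (hT : Measurable fun p : α × ℝ => T p.1 p.2)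
    (hint : Integrable (fun ω => T (W ω) (ξ ω) * X ω) P) :
    ∫ ω, T (W ω) (ξ ω) * X ω ∂P = 0 := by
  set WX : Ω → α × ℝ := fun ω => (W ω, X ω) with hWX_def
  have hWXme : Measurable WX := hW.prodMk hXme
  set pair : Ω → (α × ℝ) × ℝ := fun ω => (WX ω, ξ ω) with hpair_def
  have hpairme : Measurable pair := hWXme.prodMk hξme
  set G : (α × ℝ) × ℝ → ℝ := fun p => T p.1.1 p.2 * p.1.2 with hG_def
  have hGme : Measurable G := by
    apply Measurable.mul
    · exact hT.comp ((measurable_fst.comp measurable_fst).prodMk measurable_snd)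
    · exact measurable_snd.comp measurable_fst
  set ν := Measure.map WX P with hν_def
  set γ := Measure.map ξ P with hγ_def
  haveI : IsProbabilityMeasure ν := Measure.isProbabilityMeasure_map hWXme.aemeasurable
  haveI : IsProbabilityMeasure γ := Measure.isProbabilityMeasure_map hξme.aemeasurable
  have hmap : Measure.map pair P = ν.prod γ :=
    (indepFun_iff_map_prod_eq_prod_map_map hWXme.aemeasurable hξme.aemeasurable).mp hind
  have hGint : Integrable G (ν.prod γ) := by
    rw [← hmap]
    exact (integrable_map_measure hGme.aestronglyMeasurable hpairme.aemeasurable).mpr hint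
  have key : ∫ ω, T (W ω) (ξ ω) * X ω ∂P = ∫ q, G q ∂(ν.prod γ) := by
    rw [← hmap, integral_map hpairme.aemeasurable hGme.aestronglyMeasurable]
  rw [key, integral_prod_symm G hGint]
  have hae : ∀ᵐ t ∂γ, ∫ p, G (p, t) ∂ν = 0 := by
    filter_upwards [hGint.prod_left_ae] with t hip
    have hsecme : Measurable fun p : α × ℝ => G (p, t) := by
      apply Measurable.mul
      · exact hT.comp (measurable_fst.prodMk measurable_const)
      · exact measurable_snd
    have hpull : ∫ p, G (p, t) ∂ν = ∫ ω, G (WX ω, t) ∂P := by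
      rw [hν_def, integral_map hWXme.aemeasurable hsecme.aestronglyMeasurable]
    rw [hpull]
    have hintω : Integrable (fun ω => T (W ω) t * X ω) P := by
      have := (integrable_map_measure hsecme.aestronglyMeasurable hWXme.aemeasurable).mp hip
      exact this
    exact aux_integral_g_mul_eq_zero P W hW X hXint hce (fun a => T a t)
      (hT.comp (measurable_id.prodMk measurable_const)) hintω
  rw [integral_congr_ae hae]
  simp

end Aux

section Mat

lemma colSpanR_eq_range {k k' : ℕ} (U : Matrix (Fin k) (Fin k') ℝ) :
    colSpanR U = LinearMap.range U.mulVecLin := by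
  rw [Matrix.range_mulVecLin, colSpanR]
  rfl

lemma mulVec_mem_colSpanR {k k' : ℕ} (U : Matrix (Fin k) (Fin k') ℝ) (w : Fin k' → ℝ) :
    U.mulVec w ∈ colSpanR U := by
  rw [colSpanR_eq_range]; exact ⟨w, rfl⟩

lemma PU_mem_colSpanR {k k' : ℕ} (U : Matrix (Fin k) (Fin k') ℝ) (v : Fin k → ℝ) :
    PU U v ∈ colSpanR U := by
  rw [PU, ← Matrix.mulVec_mulVec]
  exact mulVec_mem_colSpanR U _

lemma PU_fix {k k' : ℕ} {U : Matrix (Fin k) (Fin k') ℝ} (hU : Uᵀ * U = 1)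
    {v : Fin k → ℝ} (hv : v ∈ colSpanR U) : PU U v = v := by
  rw [colSpanR_eq_range] at hv
  obtain ⟨w, rfl⟩ := hv
  show PU U (U.mulVec w) = U.mulVec w
  rw [PU, Matrix.mulVec_mulVec, Matrix.mul_assoc, hU, Matrix.mul_one]

lemma PU_symm {k k' : ℕ} (U : Matrix (Fin k) (Fin k') ℝ) : (U * Uᵀ)ᵀ = U * Uᵀ := by
  rw [Matrix.transpose_mul, Matrix.transpose_transpose]

lemma PUperp_eq_mulVec {k k' : ℕ} (U : Matrix (Fin k) (Fin k') ℝ) (v : Fin k → ℝ) :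
    PUperp U v = (1 - U * Uᵀ).mulVec v := by
  rw [PUperp, PU, Matrix.sub_mulVec, Matrix.one_mulVec]

lemma dotProduct_PU {k k' : ℕ} {U : Matrix (Fin k) (Fin k') ℝ} (hU : Uᵀ * U = 1)
    {a : Fin k → ℝ} (ha : a ∈ colSpanR U) (v : Fin k → ℝ) :
    a ⬝ᵥ (PU U v) = a ⬝ᵥ v := by
  rw [PU, Matrix.dotProduct_mulVec, ← Matrix.mulVec_transpose, PU_symm]
  show (PU U a) ⬝ᵥ v = a ⬝ᵥ v
  rw [PU_fix hU ha]

lemma exists_frame {k : ℕ} (V : Submodule ℝ (Fin k → ℝ)) :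
    ∃ (k₃ : ℕ) (U₃ : Matrix (Fin k) (Fin k₃) ℝ), U₃ᵀ * U₃ = 1 ∧ colSpanR U₃ = V := by
  classical
  set E := EuclideanSpace ℝ (Fin k)
  set e : E ≃ₗ[ℝ] (Fin k → ℝ) := WithLp.linearEquiv 2 ℝ (Fin k → ℝ) with he_def
  set V' : Submodule ℝ E := V.comap (e : E →ₗ[ℝ] (Fin k → ℝ)) with hV'_def
  set b := stdOrthonormalBasis ℝ V' with hb_def
  refine ⟨Module.finrank ℝ V', Matrix.of fun i c => e ((b c : E)) i, ?_, ?_⟩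
  · ext c c'
    have horth := orthonormal_iff_ite.mp b.orthonormal c c'
    have hlhs : ((Matrix.of fun i c => e ((b c : E)) i)ᵀ * Matrix.of fun i c => e ((b c : E)) i) c c'
        = (inner (𝕜 := ℝ) ((b c : E)) ((b c' : E)) : ℝ) := by
      rw [PiLp.inner_apply]
      simp only [Matrix.mul_apply, Matrix.transpose_apply, Matrix.of_apply,
        RCLike.inner_apply, starRingEnd_apply, star_trivial]
      exact Finset.sum_congr rfl fun _ _ => mul_comm _ _
    have hinner : (inner (𝕜 := ℝ) ((b c : E)) ((b c' : E)) : ℝ) = inner ℝ (b c) (b c') := rfl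
    rw [hlhs, hinner, horth, Matrix.one_apply]
  · have hrange : (Set.range fun c : Fin (Module.finrank ℝ V') =>
        (fun i => (Matrix.of fun i c => e ((b c : E)) i) i c)) =
        ⇑e '' (⇑V'.subtype '' Set.range ⇑b) := by
      ext v
      simp only [Set.mem_range, Set.mem_image, Matrix.of_apply]
      constructor
      · rintro ⟨c, rfl⟩
        exact ⟨(b c : E), ⟨b c, ⟨c, rfl⟩, rfl⟩, rfl⟩
      · rintro ⟨x, ⟨y, ⟨c, rfl⟩, rfl⟩, rfl⟩
        exact ⟨c, rfl⟩
    rw [colSpanR, hrange, Submodule.span_image_linearEquiv, Submodule.span_image]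
    have hspan : Submodule.span ℝ (Set.range ⇑b) = ⊤ := by
      rw [← OrthonormalBasis.coe_toBasis b]
      exact Module.Basis.span_eq b.toBasis
    rw [hspan, Submodule.map_subtype_top]
    rw [hV'_def]
    exact Submodule.map_comap_eq_of_surjective e.surjective V

end Mat

theorem stmt18 (k : ℕ)
    (Ω : Type*) [MeasurableSpace Ω] (P : Measure Ω) [IsProbabilityMeasure P]
    (z : Ω → Fin k → ℝ) (ε ξ : Ω → ℝ) (h : (Fin k → ℝ) → ℝ → ℝ)
    (hzme : Measurable z) (hεme : Measurable ε) (hξme : Measurable ξ)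
    (hhme : Measurable fun p : (Fin k → ℝ) × ℝ => h p.1 p.2)
    (hz : Measure.map z P = Measure.pi fun _ : Fin k => gaussianReal 0 1)
    (hε : Measure.map ε P = gaussianReal 0 1)
    (hξ : Measure.map ξ P = gaussianReal 0 1)
    (hind1 : IndepFun z ε P)
    (hind2 : IndepFun (fun ω => (z ω, ε ω)) ξ P) :
    let y : Ω → ℝ := fun ω => h (z ω) (ε ω)
    (∀ (k' : ℕ) (U : Matrix (Fin k) (Fin k') ℝ), Uᵀ * U = 1 →
      (IsHardFrame Ω P z y ξ U ↔
        ∀ j, P[(fun ω => PU U (z ω) j) |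
            MeasurableSpace.comap (fun ω => (y ω, PUperp U (z ω))) inferInstance]
          =ᵐ[P] 0)) ∧
    (∀ (k₁ k₂ : ℕ) (U₁ : Matrix (Fin k) (Fin k₁) ℝ) (U₂ : Matrix (Fin k) (Fin k₂) ℝ),
      IsHardFrame Ω P z y ξ U₁ → IsHardFrame Ω P z y ξ U₂ →
      ∃ (k₃ : ℕ) (U₃ : Matrix (Fin k) (Fin k₃) ℝ),
        IsHardFrame Ω P z y ξ U₃ ∧ colSpanR U₃ = colSpanR U₁ ⊔ colSpanR U₂) ∧
    (∃! V : Submodule ℝ (Fin k → ℝ),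
      (∃ (k' : ℕ) (U : Matrix (Fin k) (Fin k') ℝ),
        IsHardFrame Ω P z y ξ U ∧ colSpanR U = V) ∧
      ∀ (k' : ℕ) (U : Matrix (Fin k) (Fin k') ℝ),
        IsHardFrame Ω P z y ξ U → colSpanR U ≤ V) := by
  classical
  intro y
  have hy : Measurable y := hhme.comp (hzme.prodMk hεme)
  have hzc : ∀ i, Integrable (fun ω => z ω i) P := aux_integrable_coord P z hzme hz
  -- part (i)
  have part1 : ∀ (k' : ℕ) (U : Matrix (Fin k) (Fin k') ℝ), Uᵀ * U = 1 →
      (IsHardFrame Ω P z y ξ U ↔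
        ∀ j, P[(fun ω => PU U (z ω) j) |
            MeasurableSpace.comap (fun ω => (y ω, PUperp U (z ω))) inferInstance]
          =ᵐ[P] 0) := by
    intro k' U hU
    set W : Ω → ℝ × (Fin k → ℝ) := fun ω => (y ω, PUperp U (z ω)) with hW_def
    have hperpme : Measurable fun ω => PUperp U (z ω) := by
      have : (fun ω => PUperp U (z ω)) = fun ω => (1 - U * Uᵀ).mulVec (z ω) := by
        funext ω; rw [PUperp_eq_mulVec]
      rw [this]
      exact aux_measurable_mulVec_comp z hzme _
    have hW : Measurable W := hy.prodMk hperpme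
    have hXme : ∀ j, Measurable fun ω => PU U (z ω) j :=
      fun j => (aux_measurable_mulVec_comp z hzme (U * Uᵀ)).eval
    have hXint : ∀ j, Integrable (fun ω => PU U (z ω) j) P :=
      fun j => aux_integrable_mulVec_coord P z hzc (U * Uᵀ) j
    constructor
    · intro hhard j
      apply aux_condexp_zero_of_setIntegrals P W hW _ (hXint j)
      intro t ht
      set T : ℝ → (Fin k → ℝ) → ℝ → ℝ := fun a bb _ => t.indicator (fun _ => (1:ℝ)) (a, bb)
        with hT_def
      have hTme : Measurable (fun p : ℝ × (Fin k → ℝ) × ℝ => T p.1 p.2.1 p.2.2) :=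
        (measurable_const.indicator ht).comp
          (measurable_fst.prodMk (measurable_fst.comp measurable_snd))
      have hTbd : ∀ ω, ‖T (y ω) (PUperp U (z ω)) (ξ ω)‖ ≤ 1 := by
        intro ω
        by_cases hmem : (y ω, PUperp U (z ω)) ∈ t <;>
          simp [hT_def, Set.indicator_apply, hmem]
      have hTint : ∀ j', Integrable
          (fun ω => T (y ω) (PUperp U (z ω)) (ξ ω) * PU U (z ω) j') P := by
        intro j'
        refine (hXint j').bdd_mul (c := 1) ?_ (Filter.Eventually.of_forall hTbd)
        exact (((measurable_const.indicator ht).comp hW)).aestronglyMeasurable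
      have h0 := hhard.2 T hTme hTint j
      calc ∫ ω in W ⁻¹' t, PU U (z ω) j ∂P
          = ∫ ω, (W ⁻¹' t).indicator (fun ω => PU U (z ω) j) ω ∂P :=
            (integral_indicator (hW ht)).symm
        _ = ∫ ω, T (y ω) (PUperp U (z ω)) (ξ ω) * PU U (z ω) j ∂P := by
            refine integral_congr_ae (Filter.Eventually.of_forall fun ω => ?_)
            by_cases hmem : W ω ∈ t <;>
              simp [Set.indicator_apply, hmem, hT_def, hW_def]
        _ = 0 := h0
    · intro hce
      refine ⟨hU, fun T hT hTint j => ?_⟩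
      have hind' : IndepFun (fun ω => (W ω, PU U (z ω) j)) ξ P := by
        have hφme : Measurable fun p : (Fin k → ℝ) × ℝ =>
            ((h p.1 p.2, PUperp U p.1), PU U p.1 j) := by
          have h1 : Measurable fun p : (Fin k → ℝ) × ℝ => PUperp U p.1 := by
            have : (fun p : (Fin k → ℝ) × ℝ => PUperp U p.1)
                = fun p : (Fin k → ℝ) × ℝ => (1 - U * Uᵀ).mulVec p.1 := by
              funext p; rw [PUperp_eq_mulVec]
            rw [this]
            exact aux_measurable_mulVec_comp _ measurable_fst _
          have h2 : Measurable fun p : (Fin k → ℝ) × ℝ => PU U p.1 j :=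
            (aux_measurable_mulVec_comp (fun p : (Fin k → ℝ) × ℝ => p.1)
              measurable_fst (U * Uᵀ)).eval
          exact (hhme.prodMk h1).prodMk h2
        exact hind2.comp hφme measurable_id
      have hT' : Measurable fun q : (ℝ × (Fin k → ℝ)) × ℝ => T q.1.1 q.1.2 q.2 :=
        hT.comp ((measurable_fst.comp measurable_fst).prodMk
          ((measurable_snd.comp measurable_fst).prodMk measurable_snd))
      exact aux_integral_T_mul_eq_zero P W hW ξ hξme _ (hXme j) (hXint j) hind'
        (hce j) (fun p r => T p.1 p.2 r) hT' (hTint j)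
  refine ⟨part1, ?_⟩
  -- part (ii)
  have part2 : ∀ (k₁ k₂ : ℕ) (U₁ : Matrix (Fin k) (Fin k₁) ℝ) (U₂ : Matrix (Fin k) (Fin k₂) ℝ),
      IsHardFrame Ω P z y ξ U₁ → IsHardFrame Ω P z y ξ U₂ →
      ∃ (k₃ : ℕ) (U₃ : Matrix (Fin k) (Fin k₃) ℝ),
        IsHardFrame Ω P z y ξ U₃ ∧ colSpanR U₃ = colSpanR U₁ ⊔ colSpanR U₂ := by
    intro k₁ k₂ U₁ U₂ h₁ h₂
    obtain ⟨k₃, U₃, hU₃, hspan⟩ := exists_frame (colSpanR U₁ ⊔ colSpanR U₂)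
    refine ⟨k₃, U₃, (part1 k₃ U₃ hU₃).mpr ?_, hspan⟩
    have hfix : ∀ v ∈ colSpanR U₁ ⊔ colSpanR U₂, PU U₃ v = v := by
      intro v hv
      exact PU_fix hU₃ (hspan ▸ hv)
    -- PUperp U₃ factors through PUperp U₁ and PUperp U₂
    have hperp : ∀ (k' : ℕ) (U' : Matrix (Fin k) (Fin k') ℝ),
        colSpanR U' ≤ colSpanR U₁ ⊔ colSpanR U₂ →
        ∀ v, PUperp U₃ v = (1 - U₃ * U₃ᵀ).mulVec (PUperp U' v) := by
      intro k' U' hle v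
      have h1 : PU U₃ (PU U' v) = PU U' v := hfix _ (hle (PU_mem_colSpanR U' v))
      rw [PUperp_eq_mulVec U₃]
      rw [show PUperp U' v = v - PU U' v from rfl]
      rw [Matrix.mulVec_sub]
      have h2 : (1 - U₃ * U₃ᵀ).mulVec (PU U' v) = 0 := by
        rw [Matrix.sub_mulVec, Matrix.one_mulVec]
        rw [show (U₃ * U₃ᵀ).mulVec (PU U' v) = PU U₃ (PU U' v) from rfl, h1]
        simp
      rw [h2, sub_zero]
    have hcomaple : ∀ (k' : ℕ) (U' : Matrix (Fin k) (Fin k') ℝ),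
        colSpanR U' ≤ colSpanR U₁ ⊔ colSpanR U₂ →
        MeasurableSpace.comap (fun ω => (y ω, PUperp U₃ (z ω))) inferInstance ≤
        MeasurableSpace.comap (fun ω => (y ω, PUperp U' (z ω))) inferInstance := by
      intro k' U' hle
      have hcomp : (fun ω => (y ω, PUperp U₃ (z ω)))
          = (fun q : ℝ × (Fin k → ℝ) => (q.1, (1 - U₃ * U₃ᵀ).mulVec q.2)) ∘
            (fun ω => (y ω, PUperp U' (z ω))) := by
        funext ω
        simp only [Function.comp_apply]
        rw [← hperp k' U' hle (z ω)]
      have hφme : Measurable fun q : ℝ × (Fin k → ℝ) =>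
          ((q.1, (1 - U₃ * U₃ᵀ).mulVec q.2) : ℝ × (Fin k → ℝ)) :=
        measurable_fst.prodMk
          (aux_measurable_mulVec_comp (fun q : ℝ × (Fin k → ℝ) => q.2) measurable_snd _)
      rw [hcomp, ← MeasurableSpace.comap_comp]
      exact (MeasurableSpace.comap_mono hφme.comap_le)
    -- conditional expectations of PU U₁ and PU U₂ coordinates vanish given m₃
    have hcondzero : ∀ (k' : ℕ) (U' : Matrix (Fin k) (Fin k') ℝ),
        IsHardFrame Ω P z y ξ U' → colSpanR U' ≤ colSpanR U₁ ⊔ colSpanR U₂ →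
        ∀ l, P[(fun ω => PU U' (z ω) l) |
          MeasurableSpace.comap (fun ω => (y ω, PUperp U₃ (z ω))) inferInstance] =ᵐ[P] 0 := by
      intro k' U' hU' hle l
      have hm' : MeasurableSpace.comap (fun ω => (y ω, PUperp U' (z ω))) inferInstance
          ≤ (inferInstance : MeasurableSpace Ω) := by
        have hperpme : Measurable fun ω => PUperp U' (z ω) := by
          have : (fun ω => PUperp U' (z ω)) = fun ω => (1 - U' * U'ᵀ).mulVec (z ω) := by
            funext ω; rw [PUperp_eq_mulVec]
          rw [this]
          exact aux_measurable_mulVec_comp z hzme _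
        exact (hy.prodMk hperpme).comap_le
      have hce' := (part1 k' U' hU'.1).mp hU' l
      have htower := (condExp_condExp_of_le (hcomaple k' U' hle) hm'
        (f := fun ω => PU U' (z ω) l) (μ := P)).symm
      refine htower.trans ?_
      refine (condExp_congr_ae
        (m := MeasurableSpace.comap (fun ω => (y ω, PUperp U₃ (z ω))) inferInstance)
        hce').trans ?_
      rw [condExp_zero]
    -- decompose each coordinate of PU U₃ z
    intro j
    have hq : (fun i => (U₃ * U₃ᵀ) i j) ∈ colSpanR U₁ ⊔ colSpanR U₂ := by
      have hcol : (fun i => (U₃ * U₃ᵀ) i j) = PU U₃ (Pi.single j 1) := by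
        funext i
        rw [PU]
        rw [Matrix.mulVec_single]
        simp
      rw [hcol, ← hspan]
      exact PU_mem_colSpanR U₃ _
    obtain ⟨a, ha, b, hb, hab⟩ := Submodule.mem_sup.mp hq
    have hpoint : ∀ ω, PU U₃ (z ω) j
        = (∑ l, a l * PU U₁ (z ω) l) + (∑ l, b l * PU U₂ (z ω) l) := by
      intro ω
      have hsym : ∀ i l : Fin k, (U₃ * U₃ᵀ) i l = (U₃ * U₃ᵀ) l i := by
        intro i l
        conv_lhs => rw [← PU_symm U₃]
        rfl
      have h1 : PU U₃ (z ω) j = ∑ l, (a l + b l) * z ω l := by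
        rw [PU]
        show ∑ l, (U₃ * U₃ᵀ) j l * z ω l = _
        refine Finset.sum_congr rfl fun l _ => ?_
        rw [hsym j l, ← congrFun hab l]
        rfl
      have h2 : (∑ l, a l * z ω l) = ∑ l, a l * PU U₁ (z ω) l := by
        have := dotProduct_PU h₁.1 ha (z ω)
        exact this.symm
      have h3 : (∑ l, b l * z ω l) = ∑ l, b l * PU U₂ (z ω) l := by
        have := dotProduct_PU h₂.1 hb (z ω)
        exact this.symm
      rw [h1]
      simp_rw [add_mul, Finset.sum_add_distrib]
      rw [h2, h3]
    have hint₁ : ∀ l, Integrable (fun ω => PU U₁ (z ω) l) P :=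
      fun l => aux_integrable_mulVec_coord P z hzc (U₁ * U₁ᵀ) l
    have hint₂ : ∀ l, Integrable (fun ω => PU U₂ (z ω) l) P :=
      fun l => aux_integrable_mulVec_coord P z hzc (U₂ * U₂ᵀ) l
    have hce₁ := hcondzero k₁ U₁ h₁ le_sup_left
    have hce₂ := hcondzero k₂ U₂ h₂ le_sup_right
    have hXeq : (fun ω => PU U₃ (z ω) j)
        = (∑ l, a l • (fun ω => PU U₁ (z ω) l)) + (∑ l, b l • (fun ω => PU U₂ (z ω) l)) := by
      funext ω
      simp only [Pi.add_apply, Finset.sum_apply, Pi.smul_apply, smul_eq_mul]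
      exact hpoint ω
    rw [hXeq]
    have hf1int : Integrable (∑ l, a l • (fun ω => PU U₁ (z ω) l)) P := by
      refine (integrable_finset_sum (μ := P) Finset.univ
        (fun l _ => (hint₁ l).smul (a l))).congr ?_
      exact Filter.Eventually.of_forall fun ω => by simp
    have hf2int : Integrable (∑ l, b l • (fun ω => PU U₂ (z ω) l)) P := by
      refine (integrable_finset_sum (μ := P) Finset.univ
        (fun l _ => (hint₂ l).smul (b l))).congr ?_
      exact Filter.Eventually.of_forall fun ω => by simp
    have hsum₁ : P[(∑ l, a l • (fun ω => PU U₁ (z ω) l)) | MeasurableSpace.comap (fun ω => (y ω, PUperp U₃ (z ω))) inferInstance] =ᵐ[P] 0 := by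
      refine (condExp_finset_sum (fun l _ => (hint₁ l).smul (a l)) _).trans ?_
      have hall : ∀ᵐ ω ∂P, ∀ l : Fin k, (P[a l • (fun ω => PU U₁ (z ω) l) | MeasurableSpace.comap (fun ω => (y ω, PUperp U₃ (z ω))) inferInstance]) ω = 0 := by
        rw [ae_all_iff]
        intro l
        have hl : P[a l • (fun ω => PU U₁ (z ω) l) |
            MeasurableSpace.comap (fun ω => (y ω, PUperp U₃ (z ω))) inferInstance]
            =ᵐ[P] (0 : Ω → ℝ) := by
          refine (condExp_smul (μ := P) (a l) (fun ω => PU U₁ (z ω) l) _).trans ?_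
          filter_upwards [hce₁ l] with ω hω
          simp [hω]
        filter_upwards [hl] with ω hω
        simpa using hω
      filter_upwards [hall] with ω hω
      simp only [Finset.sum_apply, Pi.zero_apply]
      exact Finset.sum_eq_zero fun l _ => hω l
    have hsum₂ : P[(∑ l, b l • (fun ω => PU U₂ (z ω) l)) | MeasurableSpace.comap (fun ω => (y ω, PUperp U₃ (z ω))) inferInstance] =ᵐ[P] 0 := by
      refine (condExp_finset_sum (fun l _ => (hint₂ l).smul (b l)) _).trans ?_
      have hall : ∀ᵐ ω ∂P, ∀ l : Fin k, (P[b l • (fun ω => PU U₂ (z ω) l) | MeasurableSpace.comap (fun ω => (y ω, PUperp U₃ (z ω))) inferInstance]) ω = 0 := by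
        rw [ae_all_iff]
        intro l
        have hl : P[b l • (fun ω => PU U₂ (z ω) l) |
            MeasurableSpace.comap (fun ω => (y ω, PUperp U₃ (z ω))) inferInstance]
            =ᵐ[P] (0 : Ω → ℝ) := by
          refine (condExp_smul (μ := P) (b l) (fun ω => PU U₂ (z ω) l) _).trans ?_
          filter_upwards [hce₂ l] with ω hω
          simp [hω]
        filter_upwards [hl] with ω hω
        simpa using hω
      filter_upwards [hall] with ω hω
      simp only [Finset.sum_apply, Pi.zero_apply]
      exact Finset.sum_eq_zero fun l _ => hω l
    refine (condExp_add hf1int hf2int _).trans ?_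
    filter_upwards [hsum₁, hsum₂] with ω h1 h2
    simp [h1, h2]
  refine ⟨part2, ?_⟩
  -- part (iii)
  set S : Set (Submodule ℝ (Fin k → ℝ)) :=
    {V | ∃ (k' : ℕ) (U : Matrix (Fin k) (Fin k') ℝ),
      IsHardFrame Ω P z y ξ U ∧ colSpanR U = V} with hS_def
  have hbot : (⊥ : Submodule ℝ (Fin k → ℝ)) ∈ S := by
    refine ⟨0, 0, ⟨?_, ?_⟩, ?_⟩
    · ext c c'; exact absurd c.2 (Nat.not_lt_zero _)
    · intro T _ _ j
      have : ∀ ω, PU (0 : Matrix (Fin k) (Fin 0) ℝ) (z ω) j = 0 := by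
        intro ω
        rw [PU]
        simp
      simp [this]
    · rw [colSpanR]
      simp
  have hSne : S.Nonempty := ⟨⊥, hbot⟩
  have hbdd : BddAbove ((fun V : Submodule ℝ (Fin k → ℝ) => Module.finrank ℝ V) '' S) := by
    refine ⟨k, ?_⟩
    rintro n ⟨V, _, rfl⟩
    have := Submodule.finrank_le V
    simpa [Module.finrank_fin_fun] using this
  have hDne : ((fun V : Submodule ℝ (Fin k → ℝ) => Module.finrank ℝ V) '' S).Nonempty :=
    hSne.image _
  have hmem := Nat.sSup_mem hDne hbdd
  obtain ⟨V, hVS, hVrank⟩ := hmem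
  have hmax : ∀ (k' : ℕ) (U' : Matrix (Fin k) (Fin k') ℝ),
      IsHardFrame Ω P z y ξ U' → colSpanR U' ≤ V := by
    intro k' U' hU'
    obtain ⟨kV, UV, hUV, hUVspan⟩ := hVS
    obtain ⟨k₃, U₃, hU₃, hsp⟩ := part2 kV k' UV U' hUV hU'
    have hsp' : colSpanR U₃ = V ⊔ colSpanR U' := by rw [hsp, hUVspan]
    have hmemS : V ⊔ colSpanR U' ∈ S := ⟨k₃, U₃, hU₃, hsp'⟩
    have hle : Module.finrank ℝ (V ⊔ colSpanR U' : Submodule ℝ (Fin k → ℝ)) ≤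
        Module.finrank ℝ V :=
      le_of_le_of_eq (le_csSup hbdd ⟨_, hmemS, rfl⟩) hVrank.symm
    have heq : V = V ⊔ colSpanR U' :=
      Submodule.eq_of_le_of_finrank_le le_sup_left hle
    rw [heq]
    exact le_sup_right
  refine ⟨V, ⟨hVS, hmax⟩, ?_⟩
  rintro V' ⟨⟨k'', U'', hU'', hsp''⟩, hmax'⟩
  refine le_antisymm ?_ ?_
  · rw [← hsp'']
    exact hmax k'' U'' hU''
  · obtain ⟨kV, UV, hUV, hUVspan⟩ := hVS
    rw [← hUVspan]
    exact hmax' kV UV hUV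
end
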